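/- Let A ∈ B(E,F) have generalized inverse A⁺ and T ∈ B(E,F) with ‖T − A‖ < ‖A⁺‖⁻¹. If R(T) ∩ N(A⁺) = {0}, then F = R(T) ⊕ N(A⁺) and E = N(T) ⊕ R(A⁺) (direct sums of closed subspaces). -/

import Mathlib

open ContinuousLinearMap

variable {E F : Type*} [NormedAddCommGroup E] [NormedSpace ℝ E] [CompleteSpace E]
  [NormedAddCommGroup F] [NormedSpace ℝ F] [CompleteSpace F]

theorem stmt7 (A T : E →L[ℝ] F) (Ap : F →L[ℝ] E)
    (h1 : A ∘L (Ap ∘L A) = A) (h2 : Ap ∘L (A ∘L Ap) = Ap)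
    (hT : ‖T - A‖ < ‖Ap‖⁻¹)
    (hR : LinearMap.range (T : E →ₗ[ℝ] F) ⊓ LinearMap.ker (Ap : F →ₗ[ℝ] E) = ⊥) :
    IsClosed (LinearMap.range (T : E →ₗ[ℝ] F) : Set F) ∧
      IsCompl (LinearMap.range (T : E →ₗ[ℝ] F)) (LinearMap.ker (Ap : F →ₗ[ℝ] E)) ∧
      IsCompl (LinearMap.ker (T : E →ₗ[ℝ] F)) (LinearMap.range (Ap : F →ₗ[ℝ] E)) := by
  have hApne : Ap ≠ 0 := by
    rintro rfl
    simp at hT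
    exact absurd hT (not_lt.2 (norm_nonneg _))
  have hAppos : (0:ℝ) < ‖Ap‖ := norm_pos_iff.2 hApne
  have hlt : ‖-((T - A) ∘L Ap)‖ < 1 := by
    rw [norm_neg]
    refine lt_of_le_of_lt (opNorm_comp_le _ _) ?_
    rw [← inv_mul_cancel₀ (ne_of_gt hAppos)]
    exact mul_lt_mul_of_pos_right hT hAppos
  set c : (F →L[ℝ] F)ˣ := Units.oneSub (-((T - A) ∘L Ap)) hlt with hcdef
  have hc : ∀ y, (↑c : F →L[ℝ] F) y = y + T (Ap y) - A (Ap y) := by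
    intro y
    show ((1 : F →L[ℝ] F) - -((T - A) ∘L Ap)) y = _
    simp [sub_apply, add_apply, coe_comp']
    abel
  have hcc : ∀ y, (↑c⁻¹ : F →L[ℝ] F) ((↑c : F →L[ℝ] F) y) = y := fun y => by
    rw [← ContinuousLinearMap.mul_apply, c.inv_mul, ContinuousLinearMap.one_apply]
  have hcc' : ∀ y, (↑c : F →L[ℝ] F) ((↑c⁻¹ : F →L[ℝ] F) y) = y := fun y => by
    rw [← ContinuousLinearMap.mul_apply, c.mul_inv, ContinuousLinearMap.one_apply]
  have h2' : ∀ u, Ap (A (Ap u)) = Ap u := fun u => by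
    have h := DFunLike.congr_fun h2 u
    simpa using h
  have fact1 : ∀ y, Ap (y - T (Ap ((↑c⁻¹ : F →L[ℝ] F) y))) = 0 := by
    intro y
    set z := (↑c⁻¹ : F →L[ℝ] F) y with hz
    rw [show y = (↑c : F →L[ℝ] F) z from (hcc' y).symm]
    rw [hc z]
    simp [map_sub, map_add, h2']
  have key : ∀ w : F, (∃ x, T x = w) → Ap w = 0 → w = 0 := by
    intro w hw1 hw2
    have hmem : w ∈ LinearMap.range (T : E →ₗ[ℝ] F) ⊓ LinearMap.ker (Ap : F →ₗ[ℝ] E) := ⟨hw1, hw2⟩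
    rw [hR] at hmem
    exact hmem
  have fact_fix : ∀ x, T (Ap ((↑c⁻¹ : F →L[ℝ] F) (T x))) = T x := by
    intro x
    have h := fact1 (T x)
    have h0 : T x - T (Ap ((↑c⁻¹ : F →L[ℝ] F) (T x))) = 0 :=
      key _ ⟨x - Ap ((↑c⁻¹ : F →L[ℝ] F) (T x)), by simp [map_sub]⟩ h
    exact (sub_eq_zero.mp h0).symm
  set S : F →L[ℝ] F := T ∘L (Ap ∘L (↑c⁻¹ : F →L[ℝ] F)) with hSdef
  have hS : ∀ y, S y = T (Ap ((↑c⁻¹ : F →L[ℝ] F) y)) := fun y => by simp [hSdef]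
  refine ⟨?_, ?_, ?_⟩
  · -- closedness of range T
    have hset : (LinearMap.range (T : E →ₗ[ℝ] F) : Set F) = (fun y => y - S y) ⁻¹' {0} := by
      ext y
      simp only [SetLike.mem_coe, LinearMap.mem_range, Set.mem_preimage,
        Set.mem_singleton_iff, sub_eq_zero]
      constructor
      · rintro ⟨x, rfl⟩
        rw [hS]
        exact (fact_fix x).symm
      · intro hy
        exact ⟨Ap ((↑c⁻¹ : F →L[ℝ] F) y), by rw [ContinuousLinearMap.coe_coe, ← hS y]; exact hy.symm⟩
    rw [hset]
    exact IsClosed.preimage (continuous_id.sub S.continuous) isClosed_singleton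
  · -- IsCompl (range T) (ker Ap)
    constructor
    · exact disjoint_iff.mpr hR
    · rw [codisjoint_iff_le_sup]
      intro y _
      refine Submodule.mem_sup.2 ⟨S y, ⟨Ap ((↑c⁻¹ : F →L[ℝ] F) y), (hS y).symm⟩,
        y - S y, ?_, by abel⟩
      rw [LinearMap.mem_ker, hS]
      exact fact1 y
  · -- IsCompl (ker T) (range Ap)
    constructor
    · rw [Submodule.disjoint_def]
      rintro x hxker ⟨y, rfl⟩
      have hx : T (Ap y) = 0 := hxker
      have hw : Ap ((↑c : F →L[ℝ] F) y) = 0 := by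
        rw [hc y]
        simp [map_sub, map_add, hx, h2']
      have hfixw : (↑c : F →L[ℝ] F) ((↑c : F →L[ℝ] F) y) = (↑c : F →L[ℝ] F) y := by
        rw [hc ((↑c : F →L[ℝ] F) y), hw]
        simp
      have hcy : (↑c : F →L[ℝ] F) y = y := by
        have h5 := congrArg (fun z => (↑c⁻¹ : F →L[ℝ] F) z) hfixw
        simpa [hcc] using h5
      have hAx : A (Ap y) = 0 := by
        have h6 := hc y
        rw [hcy, hx, add_zero] at h6
        exact sub_eq_self.mp h6.symm
      have : Ap y = 0 := by
        rw [← h2' y, hAx, map_zero]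
      exact this
    · rw [codisjoint_iff_le_sup]
      intro x _
      refine Submodule.mem_sup.2 ⟨x - Ap ((↑c⁻¹ : F →L[ℝ] F) (T x)), ?_,
        Ap ((↑c⁻¹ : F →L[ℝ] F) (T x)), ⟨_, rfl⟩, by abel⟩
      rw [LinearMap.mem_ker, map_sub, ContinuousLinearMap.coe_coe, fact_fix x, sub_self]
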